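/- arXiv:1705.04974 — 4 statements merged into one kernel-verified Lean document; each statement's English description precedes it below -/
import Mathlib

section
/- Let W be a positive random variable that is unimodal at 0 (its cdf is concave on (0,∞) with F(0)=0), and let Q_1, ..., Q_n be exchangeable positive random variables independent of W. Then for any real n-vectors a, b with nonnegative entries such that a is majorized by b, the random variable W / (sum_l a_l Q_l) is stochastically smaller than W / (sum_l b_l Q_l), i.e., P[W / (sum_l a_l Q_l) > t] <= P[W / (sum_l b_l Q_l) > t] for all real t. -/
open Finset

/-- `a` is majorized by `b`: the total sums agree and, after rearranging each vector
in non-increasing order, every partial sum of `a` is at most the corresponding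
partial sum of `b`. -/
def IsMajorizedBy {n : ℕ} (a b : Fin n → ℝ) : Prop :=
  (∑ i, a i = ∑ i, b i) ∧
  ∀ σ τ : Equiv.Perm (Fin n), Antitone (a ∘ σ) → Antitone (b ∘ τ) →
    ∀ r : ℕ,
      ∑ i ∈ Finset.univ.filter (fun i : Fin n => (i : ℕ) < r), a (σ i) ≤
        ∑ i ∈ Finset.univ.filter (fun i : Fin n => (i : ℕ) < r), b (τ i)

open MeasureTheory ProbabilityTheory

namespace EOaux

variable {n : ℕ}

lemma exists_antitone_sort (a : Fin n → ℝ) : ∃ σ : Equiv.Perm (Fin n), Antitone (a ∘ σ) := by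
  refine ⟨Tuple.sort (fun i => -a i), fun i1 i2 h => ?_⟩
  have := Tuple.monotone_sort (fun i => -a i) h
  simpa using this

lemma sum_filter_succ (k : Fin n) (g : Fin n → ℝ) :
    ∑ i ∈ Finset.univ.filter (fun i : Fin n => (i : ℕ) < (k : ℕ) + 1), g i
      = ∑ i ∈ Finset.univ.filter (fun i : Fin n => (i : ℕ) < (k : ℕ)), g i + g k := by
  have h : Finset.univ.filter (fun i : Fin n => (i : ℕ) < (k : ℕ) + 1)
      = insert k (Finset.univ.filter (fun i : Fin n => (i : ℕ) < (k : ℕ))) := by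
    ext i
    simp only [mem_filter, mem_univ, true_and, mem_insert, Nat.lt_succ_iff_lt_or_eq]
    constructor
    · rintro (h | h)
      · exact Or.inr h
      · exact Or.inl (Fin.ext h)
    · rintro (rfl | h)
      · exact Or.inr rfl
      · exact Or.inl h
  rw [h, Finset.sum_insert (by simp)]
  ring

lemma sorted_chain (f : (Fin n → ℝ) → ENNReal)
    (hS : ∀ (π : Equiv.Perm (Fin n)) (c : Fin n → ℝ), f (c ∘ π) = f c)
    (hC : ∀ c d : Fin n → ℝ, (∀ i, 0 ≤ c i) → (∀ i, 0 ≤ d i) →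
      0 < ∑ i, c i → 0 < ∑ i, d i → ∀ l : ℝ, 0 ≤ l → l ≤ 1 →
      ENNReal.ofReal l * f c + ENNReal.ofReal (1 - l) * f d
        ≤ f (fun i => l * c i + (1 - l) * d i)) :
    ∀ m : ℕ, ∀ a c : Fin n → ℝ,
      (Finset.univ.filter fun i => a i ≠ c i).card ≤ m →
      Antitone a → Antitone c → (∀ i, 0 ≤ a i) → (∀ i, 0 ≤ c i) →
      (∑ i, a i = ∑ i, c i) → 0 < ∑ i, a i →
      (∀ r : ℕ, ∑ i ∈ Finset.univ.filter (fun i : Fin n => (i : ℕ) < r), a i ≤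
        ∑ i ∈ Finset.univ.filter (fun i : Fin n => (i : ℕ) < r), c i) →
      f c ≤ f a := by
  intro m
  induction m with
  | zero =>
    intro a c hcard _ _ _ _ _ _ _
    have : a = c := by
      funext i
      by_contra hne
      have : i ∈ Finset.univ.filter fun i => a i ≠ c i := by simp [hne]
      have := Finset.card_pos.mpr ⟨i, this⟩
      omega
    rw [this]
  | succ m ih =>
    intro a c hcard ha_anti hc_anti ha_nn hc_nn hsum hpos hPS
    by_cases hac : a = c
    · rw [hac]
    -- find k : minimal index with c k < a k
    have hKne : (Finset.univ.filter fun i => c i < a i).Nonempty := by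
      by_contra hK
      rw [Finset.not_nonempty_iff_eq_empty] at hK
      have hle : ∀ i ∈ Finset.univ, a i ≤ c i := by
        intro i _
        by_contra h
        have : i ∈ Finset.univ.filter fun i => c i < a i := by
          simp [lt_of_not_ge h]
        simp [hK] at this
      have := (Finset.sum_eq_sum_iff_of_le hle).mp hsum
      exact hac (funext fun i => this i (Finset.mem_univ i))
    set k := (Finset.univ.filter fun i => c i < a i).min' hKne with hk_def
    have hk : c k < a k := by
      have h := Finset.min'_mem _ hKne
      rw [Finset.mem_filter] at h
      exact h.2
    have hkmin : ∀ i, i < k → a i ≤ c i := by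
      intro i hi
      by_contra h
      have : i ∈ Finset.univ.filter fun i => c i < a i := by simp [lt_of_not_ge h]
      have := Finset.min'_le _ _ this
      exact absurd (lt_of_lt_of_le hi this) (lt_irrefl i)
    -- find j : maximal index < k with a j < c j
    have hJne : (Finset.univ.filter fun i => i < k ∧ a i < c i).Nonempty := by
      by_contra hJ
      rw [Finset.not_nonempty_iff_eq_empty] at hJ
      have heq : ∀ i, i < k → a i = c i := by
        intro i hi
        refine le_antisymm (hkmin i hi) ?_
        by_contra h
        have : i ∈ Finset.univ.filter fun i => i < k ∧ a i < c i := by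
          simp [hi, lt_of_not_ge h]
        simp [hJ] at this
      have h1 := hPS ((k : ℕ) + 1)
      rw [sum_filter_succ k a, sum_filter_succ k c] at h1
      have h2 : ∑ i ∈ Finset.univ.filter (fun i : Fin n => (i : ℕ) < (k : ℕ)), a i
          = ∑ i ∈ Finset.univ.filter (fun i : Fin n => (i : ℕ) < (k : ℕ)), c i := by
        refine Finset.sum_congr rfl fun i hi => ?_
        simp only [mem_filter] at hi
        exact heq i (Fin.lt_def.mpr hi.2)
      linarith
    set j := (Finset.univ.filter fun i => i < k ∧ a i < c i).max' hJne with hj_def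
    have hjk : j < k ∧ a j < c j := by
      have h := Finset.max'_mem _ hJne
      rw [Finset.mem_filter] at h
      exact h.2
    have hjmax : ∀ i, j < i → i < k → c i ≤ a i := by
      intro i hji hik
      by_contra h
      have : i ∈ Finset.univ.filter fun i => i < k ∧ a i < c i := by
        simp [hik, lt_of_not_ge h]
      have h2 := Finset.le_max' _ _ this
      exact absurd (lt_of_lt_of_le hji h2) (lt_irrefl _)
    have between : ∀ i, j < i → i < k → a i = c i := fun i h1 h2 =>
      le_antisymm (hkmin i h2) (hjmax i h1 h2)
    have hjltk : j < k := hjk.1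
    have hjnek : j ≠ k := ne_of_lt hjltk
    have hajcj : a j < c j := hjk.2
    have hakaj : a k ≤ a j := ha_anti (le_of_lt hjltk)
    have hckcj : c k < c j := lt_of_lt_of_le (lt_of_lt_of_le hk hakaj) (le_of_lt hajcj)
    set δ := min (c j - a j) (a k - c k) with hδ_def
    have hδpos : 0 < δ := lt_min (by linarith) (by linarith)
    have hδj : δ ≤ c j - a j := min_le_left _ _
    have hδk : δ ≤ a k - c k := min_le_right _ _
    have hδjk : δ ≤ c j - c k := le_trans hδj (by linarith)
    set l : ℝ := 1 - δ / (c j - c k) with hl_def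
    have hcjk0 : (0:ℝ) < c j - c k := by linarith
    have hl0 : 0 ≤ l := by
      have h : δ / (c j - c k) ≤ 1 := (div_le_one hcjk0).mpr hδjk
      rw [hl_def]
      linarith
    have hl1 : l ≤ 1 := by
      have h : 0 ≤ δ / (c j - c k) := div_nonneg (le_of_lt hδpos) (le_of_lt hcjk0)
      rw [hl_def]
      linarith
    have h1l : (1 - l) * (c j - c k) = δ := by
      rw [hl_def]
      field_simp
      ring
    set c' : Fin n → ℝ := fun i => l * c i + (1 - l) * c (Equiv.swap j k i) with hc'_def
    have hc'j : c' j = c j - δ := by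
      simp only [hc'_def, Equiv.swap_apply_left]
      linarith [h1l]
    have hc'k : c' k = c k + δ := by
      simp only [hc'_def, Equiv.swap_apply_right]
      linarith [h1l]
    have hc'other : ∀ i, i ≠ j → i ≠ k → c' i = c i := by
      intro i h1 h2
      simp only [hc'_def, Equiv.swap_apply_of_ne_of_ne h1 h2]
      ring
    have hajc'j : a j ≤ c' j := by rw [hc'j]; linarith
    have hc'kak : c' k ≤ a k := by rw [hc'k]; linarith
    have hc'jcj : c' j ≤ c j := by rw [hc'j]; linarith
    have hckc'k : c k ≤ c' k := by rw [hc'k]; linarith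
    -- step inequality : f c ≤ f c'
    have hsumc : 0 < ∑ i, c i := hsum ▸ hpos
    have hsumswap : ∑ i, c (Equiv.swap j k i) = ∑ i, c i := Equiv.sum_comp _ _
    have hstep : f c ≤ f c' := by
      have h := hC c (fun i => c (Equiv.swap j k i)) hc_nn (fun i => hc_nn _)
        hsumc (by rw [hsumswap]; exact hsumc) l hl0 hl1
      have hswap : f (fun i => c (Equiv.swap j k i)) = f c := hS (Equiv.swap j k) c
      rw [hswap] at h
      calc f c = 1 * f c := (one_mul _).symm
        _ = ENNReal.ofReal (l + (1 - l)) * f c := by norm_num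
        _ = (ENNReal.ofReal l + ENNReal.ofReal (1 - l)) * f c := by
            rw [ENNReal.ofReal_add hl0 (by linarith)]
        _ = ENNReal.ofReal l * f c + ENNReal.ofReal (1 - l) * f c := by rw [add_mul]
        _ ≤ f c' := h
    -- invariants for c'
    have hc'_nn : ∀ i, 0 ≤ c' i := fun i =>
      add_nonneg (mul_nonneg hl0 (hc_nn _)) (mul_nonneg (by linarith) (hc_nn _))
    have hsum' : ∑ i, a i = ∑ i, c' i := by
      have : ∑ i, c' i = l * ∑ i, c i + (1 - l) * ∑ i, c (Equiv.swap j k i) := by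
        rw [Finset.sum_add_distrib, ← Finset.mul_sum, ← Finset.mul_sum]
      rw [this, hsumswap]
      linarith [hsum]
    have hc'_anti : Antitone c' := by
      intro i1 i2 h12
      by_cases h2j : i2 = j
      · have h12' : i1 ≤ j := h2j ▸ h12
        rw [h2j]
        rcases eq_or_ne i1 j with h1 | h1
        · rw [h1]
        · have h1j : i1 < j := lt_of_le_of_ne h12' h1
          have h1k : i1 ≠ k := ne_of_lt (lt_trans h1j hjltk)
          rw [hc'other i1 (ne_of_lt h1j) h1k]
          exact le_trans hc'jcj (hc_anti (le_of_lt h1j))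
      by_cases h2k : i2 = k
      · have h12' : i1 ≤ k := h2k ▸ h12
        rw [h2k]
        rcases eq_or_ne i1 k with h1 | h1
        · rw [h1]
        rcases eq_or_ne i1 j with h1j | h1j
        · rw [h1j]
          exact le_trans hc'kak (le_trans hakaj hajc'j)
        · have h1k : i1 < k := lt_of_le_of_ne h12' h1
          rw [hc'other i1 h1j h1]
          exact le_trans hc'kak (le_trans (ha_anti h12') (hkmin i1 h1k))
      rw [hc'other i2 h2j h2k]
      rcases eq_or_ne i1 j with h1j | h1j
      · rw [h1j]
        have hji2 : j < i2 := lt_of_le_of_ne (h1j ▸ h12) (Ne.symm h2j)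
        rcases lt_or_ge i2 k with hlt | hge
        · rw [← between i2 hji2 hlt]
          exact le_trans (ha_anti (le_of_lt hji2)) hajc'j
        · have hki2 : k < i2 := lt_of_le_of_ne hge (Ne.symm h2k)
          calc c i2 ≤ c k := hc_anti (le_of_lt hki2)
            _ ≤ c' k := hckc'k
            _ ≤ a k := hc'kak
            _ ≤ a j := hakaj
            _ ≤ c' j := hajc'j
      rcases eq_or_ne i1 k with h1k | h1k
      · rw [h1k]
        have hki2 : k < i2 := lt_of_le_of_ne (h1k ▸ h12) (Ne.symm h2k)
        exact le_trans (hc_anti (le_of_lt hki2)) hckc'k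
      · rw [hc'other i1 h1j h1k]
        exact hc_anti h12
    have hPS' : ∀ r : ℕ, ∑ i ∈ Finset.univ.filter (fun i : Fin n => (i : ℕ) < r), a i ≤
        ∑ i ∈ Finset.univ.filter (fun i : Fin n => (i : ℕ) < r), c' i := by
      intro r
      have hsum_c' : ∑ i ∈ Finset.univ.filter (fun i : Fin n => (i : ℕ) < r), c' i
          = ∑ i ∈ Finset.univ.filter (fun i : Fin n => (i : ℕ) < r), c i
            + (if k ∈ Finset.univ.filter (fun i : Fin n => (i : ℕ) < r) then δ else 0)
            - (if j ∈ Finset.univ.filter (fun i : Fin n => (i : ℕ) < r) then δ else 0) := by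
        have hpt : ∀ i ∈ Finset.univ.filter (fun i : Fin n => (i : ℕ) < r),
            c' i = c i + (if i = k then δ else 0) - (if i = j then δ else 0) := by
          intro i _
          rcases eq_or_ne i j with rfl | hij
          · rw [hc'j, if_neg hjnek, if_pos rfl]; ring
          rcases eq_or_ne i k with rfl | hik
          · rw [hc'k, if_pos rfl, if_neg hij]; ring
          · rw [hc'other i hij hik, if_neg hik, if_neg hij]; ring
        rw [Finset.sum_congr rfl hpt, Finset.sum_sub_distrib, Finset.sum_add_distrib,
          Finset.sum_ite_eq' _ k (fun _ => δ), Finset.sum_ite_eq' _ j (fun _ => δ)]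
      rcases lt_or_ge (k : ℕ) r with hkr | hrk
      · -- both j, k in range
        have hjr : (j : ℕ) < r := lt_trans (Fin.lt_def.mp hjltk) hkr
        rw [hsum_c', if_pos (by simp [hkr]), if_pos (by simp [hjr])]
        have := hPS r
        linarith
      rcases le_or_gt r (j : ℕ) with hrj | hjr
      · -- neither in range
        have hkr' : ¬ ((k : ℕ) < r) := by omega
        have hjr' : ¬ ((j : ℕ) < r) := by omega
        rw [hsum_c', if_neg (by simp [hkr']), if_neg (by simp [hjr'])]
        have := hPS r
        linarith
      · -- j in range, k not
        have hkr' : ¬ ((k : ℕ) < r) := by omega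
        rw [hsum_c', if_neg (by simp [hkr']), if_pos (by simp [hjr])]
        -- need : ∑_{i<r} a ≤ ∑_{i<r} c - δ
        have hsubset : Finset.univ.filter (fun i : Fin n => (i : ℕ) < (j : ℕ) + 1)
            ⊆ Finset.univ.filter (fun i : Fin n => (i : ℕ) < r) := by
          intro i hi
          simp only [mem_filter, mem_univ, true_and] at hi ⊢
          omega
        have hdiff : ∀ g : Fin n → ℝ,
            ∑ i ∈ Finset.univ.filter (fun i : Fin n => (i : ℕ) < r), g i
            = ∑ i ∈ (Finset.univ.filter (fun i : Fin n => (i : ℕ) < r) \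
                Finset.univ.filter (fun i : Fin n => (i : ℕ) < (j : ℕ) + 1)), g i
              + ∑ i ∈ Finset.univ.filter (fun i : Fin n => (i : ℕ) < (j : ℕ) + 1), g i :=
          fun g => (Finset.sum_sdiff hsubset).symm
        have hD_eq : ∀ i ∈ (Finset.univ.filter (fun i : Fin n => (i : ℕ) < r) \
            Finset.univ.filter (fun i : Fin n => (i : ℕ) < (j : ℕ) + 1)), a i = c i := by
          intro i hi
          simp only [Finset.mem_sdiff, mem_filter, mem_univ, true_and, not_lt] at hi
          exact between i (Fin.lt_def.mpr (by omega)) (Fin.lt_def.mpr (by omega))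
        rw [hdiff a, hdiff c, sum_filter_succ j a, sum_filter_succ j c,
          Finset.sum_congr rfl hD_eq]
        have := hPS (j : ℕ)
        linarith
    -- card decrease
    have hsub : (Finset.univ.filter fun i => a i ≠ c' i)
        ⊆ (Finset.univ.filter fun i => a i ≠ c i) := by
      intro i hi
      simp only [mem_filter, mem_univ, true_and] at hi ⊢
      rcases eq_or_ne i j with rfl | hij
      · exact ne_of_lt hajcj
      rcases eq_or_ne i k with rfl | hik
      · exact ne_of_gt hk
      · rwa [← hc'other i hij hik]
    have hssub : (Finset.univ.filter fun i => a i ≠ c' i)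
        ⊂ (Finset.univ.filter fun i => a i ≠ c i) := by
      refine ⟨hsub, fun hrev => ?_⟩
      rcases min_cases (c j - a j) (a k - c k) with ⟨hmin, _⟩ | ⟨hmin, _⟩
      · have hjin : j ∈ Finset.univ.filter fun i => a i ≠ c i := by
          simp [ne_of_lt hajcj]
        have := hrev hjin
        simp only [mem_filter, mem_univ, true_and] at this
        apply this
        rw [hc'j, hδ_def, hmin]; ring
      · have hkin : k ∈ Finset.univ.filter fun i => a i ≠ c i := by
          simp [ne_of_gt hk]
        have := hrev hkin
        simp only [mem_filter, mem_univ, true_and] at this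
        apply this
        rw [hc'k, hδ_def, hmin]; ring
    have hcard' : (Finset.univ.filter fun i => a i ≠ c' i).card ≤ m := by
      have := Finset.card_lt_card hssub
      omega
    exact le_trans hstep (ih a c' hcard' ha_anti hc'_anti ha_nn hc'_nn hsum' hpos hPS')


end EOaux


theorem eaton_olshen_stochastic_ordering
    {Ω : Type*} [MeasurableSpace Ω] (P : Measure Ω) [IsProbabilityMeasure P]
    {n : ℕ} (W : Ω → ℝ) (Q : Fin n → Ω → ℝ)
    (hW_meas : Measurable W) (hQ_meas : ∀ i, Measurable (Q i))
    -- W is a.s. positive and unimodal at 0: its cdf vanishes at 0 and is concave on (0, ∞)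
    (hW_cdf0 : P {ω | W ω ≤ 0} = 0)
    (hW_unimodal : ConcaveOn ℝ (Set.Ioi 0) (fun t => (P {ω | W ω ≤ t}).toReal))
    -- the Q_i are a.s. positive
    (hQ_pos : ∀ i, ∀ᵐ ω ∂P, 0 < Q i ω)
    -- the Q_i are exchangeable
    (hQ_exch : ∀ e : Equiv.Perm (Fin n),
      Measure.map (fun ω => fun i => Q (e i) ω) P = Measure.map (fun ω => fun i => Q i ω) P)
    -- W is independent of (Q_1, ..., Q_n)
    (hWQ_indep : IndepFun W (fun ω => fun i => Q i ω) P) :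
    ∀ a b : Fin n → ℝ, (∀ i, 0 ≤ a i) → (∀ i, 0 ≤ b i) → IsMajorizedBy a b →
      ∀ t : ℝ,
        P {ω | t < W ω / ∑ i, a i * Q i ω} ≤ P {ω | t < W ω / ∑ i, b i * Q i ω} := by
  intro a b ha_nn hb_nn hmaj t
  obtain ⟨hsum_ab, hmaj2⟩ := hmaj
  by_cases hpos : 0 < ∑ i, a i
  swap
  · -- degenerate case : all coefficients vanish
    have hsa : ∑ i, a i = 0 :=
      le_antisymm (not_lt.mp hpos) (Finset.sum_nonneg fun i _ => ha_nn i)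
    have hsb : ∑ i, b i = 0 := hsum_ab ▸ hsa
    have ha0 : ∀ i, a i = 0 := fun i =>
      (Finset.sum_eq_zero_iff_of_nonneg fun i _ => ha_nn i).mp hsa i (Finset.mem_univ i)
    have hb0 : ∀ i, b i = 0 := fun i =>
      (Finset.sum_eq_zero_iff_of_nonneg fun i _ => hb_nn i).mp hsb i (Finset.mem_univ i)
    have : ∀ ω, (∑ i, a i * Q i ω) = ∑ i, b i * Q i ω := by
      intro ω
      simp [ha0, hb0]
    simp only [this]
    exact le_refl _
  -- main case
  have hsum_b_pos : 0 < ∑ i, b i := hsum_ab ▸ hpos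
  -- basic measurability / setup
  set QV : Ω → (Fin n → ℝ) := fun ω i => Q i ω with hQV_def
  have hQV_meas : Measurable QV := measurable_pi_lambda _ hQ_meas
  set μ : Measure (Fin n → ℝ) := Measure.map QV P with hμ_def
  haveI : IsProbabilityMeasure μ := Measure.isProbabilityMeasure_map hQV_meas.aemeasurable
  have hW_pos : ∀ᵐ ω ∂P, 0 < W ω := by
    rw [MeasureTheory.ae_iff]
    convert hW_cdf0 using 2
    ext ω
    simp [not_lt]
  have hQ_pos_all : ∀ᵐ ω ∂P, ∀ i, 0 < Q i ω := MeasureTheory.ae_all_iff.mpr hQ_pos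
  have hposset_meas : MeasurableSet {q : Fin n → ℝ | ∀ i, 0 < q i} := by
    have : {q : Fin n → ℝ | ∀ i, 0 < q i} = ⋂ i, (fun q : Fin n → ℝ => q i) ⁻¹' Set.Ioi 0 := by
      ext q; simp
    rw [this]
    exact MeasurableSet.iInter fun i => (measurable_pi_apply i) measurableSet_Ioi
  have hμ_pos : ∀ᵐ q ∂μ, ∀ i, 0 < q i := by
    rw [hμ_def, MeasureTheory.ae_map_iff hQV_meas.aemeasurable hposset_meas]
    exact hQ_pos_all
  -- positivity of weighted sums
  have hsum_pos : ∀ (c : Fin n → ℝ), (∀ i, 0 ≤ c i) → 0 < ∑ i, c i →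
      ∀ q : Fin n → ℝ, (∀ i, 0 < q i) → 0 < ∑ i, c i * q i := by
    intro c hc hcs q hq
    obtain ⟨i0, -, hi0⟩ := Finset.exists_lt_of_sum_lt (by simpa using hcs :
      ∑ i : Fin n, (0:ℝ) < ∑ i, c i)
    exact Finset.sum_pos' (fun i _ => mul_nonneg (hc i) (le_of_lt (hq i)))
      ⟨i0, Finset.mem_univ i0, mul_pos hi0 (hq i0)⟩
  rcases le_or_gt t 0 with ht | ht
  · -- t ≤ 0 : the right-hand side has probability one
    have hfull : ∀ᵐ ω ∂P, ω ∈ {ω | t < W ω / ∑ i, b i * Q i ω} := by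
      filter_upwards [hW_pos, hQ_pos_all] with ω hw hq
      have hS : 0 < ∑ i, b i * Q i ω := hsum_pos b hb_nn hsum_b_pos _ hq
      have : 0 < W ω / ∑ i, b i * Q i ω := div_pos hw hS
      exact lt_of_le_of_lt ht this
    have hnull : P {ω | t < W ω / ∑ i, b i * Q i ω}ᶜ = 0 := by
      rw [MeasureTheory.ae_iff] at hfull
      convert hfull using 2
      rfl
    have h1 : (1 : ENNReal) ≤ P {ω | t < W ω / ∑ i, b i * Q i ω} := by
      have := measure_union_le (μ := P) {ω | t < W ω / ∑ i, b i * Q i ω}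
        {ω | t < W ω / ∑ i, b i * Q i ω}ᶜ
      rw [Set.union_compl_self, measure_univ, hnull, add_zero] at this
      exact this
    exact le_trans prob_le_one h1
  -- t > 0 : the heart of the matter
  -- cdf machinery
  set Fe : ℝ → ENNReal := fun s => P {ω | W ω ≤ s} with hFe_def
  have hFe_mono : Monotone Fe := by
    intro s s' hss
    exact measure_mono fun ω hω => le_trans hω hss
  have hFe_meas : Measurable Fe := hFe_mono.measurable
  have hFe_le_one : ∀ s, Fe s ≤ 1 := fun s => prob_le_one
  have hFe_ne_top : ∀ s, Fe s ≠ ⊤ := fun s => measure_ne_top _ _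
  set F : ℝ → ℝ := fun s => (P {ω | W ω ≤ s}).toReal with hF_def
  have hFeF : ∀ s, Fe s = ENNReal.ofReal (F s) := fun s =>
    (ENNReal.ofReal_toReal (hFe_ne_top s)).symm
  -- the functional
  set fT : (Fin n → ℝ) → ENNReal := fun c => ∫⁻ q, Fe (t * ∑ i, c i * q i) ∂μ with hfT_def
  have hg_meas : ∀ c : Fin n → ℝ, Measurable fun q : Fin n → ℝ => Fe (t * ∑ i, c i * q i) := by
    intro c
    exact hFe_meas.comp (measurable_const.mul
      (Finset.measurable_sum _ fun i _ => (measurable_const.mul (measurable_pi_apply i))))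
  -- symmetry of fT
  have hS : ∀ (π : Equiv.Perm (Fin n)) (c : Fin n → ℝ), fT (c ∘ π) = fT c := by
    intro π c
    have hQV' : Measurable fun ω => (fun i => Q (π.symm i) ω) :=
      measurable_pi_lambda _ fun i => hQ_meas _
    calc fT (c ∘ π) = ∫⁻ ω, Fe (t * ∑ i, c (π i) * Q i ω) ∂P :=
          MeasureTheory.lintegral_map (hg_meas (c ∘ π)) hQV_meas
      _ = ∫⁻ ω, Fe (t * ∑ i, c i * Q (π.symm i) ω) ∂P := by
          refine lintegral_congr fun ω => ?_
          congr 2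
          have h := Equiv.sum_comp π (fun i => c i * Q (π.symm i) ω)
          simp only [Equiv.symm_apply_apply] at h
          exact h
      _ = ∫⁻ q, Fe (t * ∑ i, c i * q i) ∂(Measure.map (fun ω => fun i => Q (π.symm i) ω) P) :=
          (MeasureTheory.lintegral_map (hg_meas c) hQV').symm
      _ = fT c := by rw [hQ_exch π.symm]
  -- concavity of fT
  have hC : ∀ c d : Fin n → ℝ, (∀ i, 0 ≤ c i) → (∀ i, 0 ≤ d i) →
      0 < ∑ i, c i → 0 < ∑ i, d i → ∀ l : ℝ, 0 ≤ l → l ≤ 1 →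
      ENNReal.ofReal l * fT c + ENNReal.ofReal (1 - l) * fT d
        ≤ fT (fun i => l * c i + (1 - l) * d i) := by
    intro c d hc hd hcs hds l hl0 hl1
    have h1l0 : (0:ℝ) ≤ 1 - l := by linarith
    calc ENNReal.ofReal l * fT c + ENNReal.ofReal (1 - l) * fT d
        = ∫⁻ q, (ENNReal.ofReal l * Fe (t * ∑ i, c i * q i)
            + ENNReal.ofReal (1 - l) * Fe (t * ∑ i, d i * q i)) ∂μ := by
          rw [MeasureTheory.lintegral_add_left ((hg_meas c).const_mul _),
            MeasureTheory.lintegral_const_mul _ (hg_meas c),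
            MeasureTheory.lintegral_const_mul _ (hg_meas d)]
      _ ≤ fT (fun i => l * c i + (1 - l) * d i) := by
          rw [hfT_def]
          refine lintegral_mono_ae ?_
          filter_upwards [hμ_pos] with q hq
          have hx : 0 < t * ∑ i, c i * q i := mul_pos ht (hsum_pos c hc hcs q hq)
          have hy : 0 < t * ∑ i, d i * q i := mul_pos ht (hsum_pos d hd hds q hq)
          have hcomb : t * ∑ i, (l * c i + (1 - l) * d i) * q i
              = l * (t * ∑ i, c i * q i) + (1 - l) * (t * ∑ i, d i * q i) := by
            calc t * ∑ i, (l * c i + (1 - l) * d i) * q i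
                = ∑ i, (l * (t * (c i * q i)) + (1 - l) * (t * (d i * q i))) := by
                  rw [Finset.mul_sum]
                  exact Finset.sum_congr rfl fun i _ => by ring
              _ = l * (t * ∑ i, c i * q i) + (1 - l) * (t * ∑ i, d i * q i) := by
                  rw [Finset.sum_add_distrib, ← Finset.mul_sum, ← Finset.mul_sum,
                    ← Finset.mul_sum, ← Finset.mul_sum]
          have hconc := hW_unimodal.2 (Set.mem_Ioi.mpr hx) (Set.mem_Ioi.mpr hy) hl0 h1l0
            (by ring : l + (1 - l) = 1)
          simp only [smul_eq_mul] at hconc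
          rw [hcomb, hFeF, hFeF, hFeF]
          calc ENNReal.ofReal l * ENNReal.ofReal (F (t * ∑ i, c i * q i))
              + ENNReal.ofReal (1 - l) * ENNReal.ofReal (F (t * ∑ i, d i * q i))
              = ENNReal.ofReal (l * F (t * ∑ i, c i * q i))
                + ENNReal.ofReal ((1 - l) * F (t * ∑ i, d i * q i)) := by
                rw [ENNReal.ofReal_mul hl0, ENNReal.ofReal_mul h1l0]
            _ = ENNReal.ofReal (l * F (t * ∑ i, c i * q i)
                + (1 - l) * F (t * ∑ i, d i * q i)) := by
                rw [ENNReal.ofReal_add (mul_nonneg hl0 ENNReal.toReal_nonneg)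
                  (mul_nonneg h1l0 ENNReal.toReal_nonneg)]
            _ ≤ ENNReal.ofReal (F (l * (t * ∑ i, c i * q i)
                + (1 - l) * (t * ∑ i, d i * q i))) := ENNReal.ofReal_le_ofReal hconc
  -- the comparison fT b ≤ fT a via the transfer chain
  have hfT_compare : fT b ≤ fT a := by
    obtain ⟨σ, hσ⟩ := EOaux.exists_antitone_sort a
    obtain ⟨τ, hτ⟩ := EOaux.exists_antitone_sort b
    have hPS := hmaj2 σ τ hσ hτ
    have hsa : ∑ i, (a ∘ σ) i = ∑ i, a i := Equiv.sum_comp σ a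
    have hsb : ∑ i, (b ∘ τ) i = ∑ i, b i := Equiv.sum_comp τ b
    have := EOaux.sorted_chain fT hS hC
      (Finset.univ.filter fun i => (a ∘ σ) i ≠ (b ∘ τ) i).card (a ∘ σ) (b ∘ τ)
      (le_refl _) hσ hτ (fun i => ha_nn _) (fun i => hb_nn _)
      (by rw [hsa, hsb]; exact hsum_ab) (by rw [hsa]; exact hpos) hPS
    calc fT b = fT (b ∘ τ) := (hS τ b).symm
      _ ≤ fT (a ∘ σ) := this
      _ = fT a := hS σ a
  -- key identity
  have hkey : ∀ c : Fin n → ℝ, (∀ i, 0 ≤ c i) → 0 < ∑ i, c i →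
      P {ω | t < W ω / ∑ i, c i * Q i ω} = 1 - fT c := by
    intro c hc hcs
    have hSc_meas : Measurable fun ω => ∑ i, c i * Q i ω :=
      Finset.measurable_sum _ fun i _ => (hQ_meas i).const_mul _
    -- step 1 : a.e. rewrite of the event
    have hstep1 : P {ω | t < W ω / ∑ i, c i * Q i ω}
        = P {ω | t * ∑ i, c i * Q i ω < W ω} := by
      refine measure_congr ?_
      rw [Filter.eventuallyEq_set]
      filter_upwards [hQ_pos_all] with ω hq
      have hS : 0 < ∑ i, c i * Q i ω := hsum_pos c hc hcs _ hq
      exact lt_div_iff₀ hS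
    -- step 2 : product representation
    have hpair : Measure.map (fun ω => (QV ω, W ω)) P = μ.prod (Measure.map W P) := by
      rw [hμ_def]
      exact (indepFun_iff_map_prod_eq_prod_map_map hQV_meas.aemeasurable
        hW_meas.aemeasurable).mp hWQ_indep.symm
    haveI : IsProbabilityMeasure (Measure.map W P) :=
      Measure.isProbabilityMeasure_map hW_meas.aemeasurable
    have hE_meas : MeasurableSet {p : (Fin n → ℝ) × ℝ | t * ∑ i, c i * p.1 i < p.2} := by
      apply measurableSet_lt
      · exact (measurable_const.mul
          (Finset.measurable_sum _ fun i _ =>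
            (measurable_const.mul (measurable_pi_apply i)))).comp measurable_fst
      · exact measurable_snd
    have hstep2 : P {ω | t * ∑ i, c i * Q i ω < W ω}
        = (μ.prod (Measure.map W P)) {p : (Fin n → ℝ) × ℝ | t * ∑ i, c i * p.1 i < p.2} := by
      rw [← hpair, Measure.map_apply (hQV_meas.prodMk hW_meas) hE_meas]
      rfl
    -- step 3 : slicing
    have hstep3 : (μ.prod (Measure.map W P)) {p : (Fin n → ℝ) × ℝ | t * ∑ i, c i * p.1 i < p.2}
        = ∫⁻ q, (Measure.map W P) {w : ℝ | t * ∑ i, c i * q i < w} ∂μ := by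
      rw [Measure.prod_apply hE_meas]
      rfl
    -- step 4 : the inner measure is 1 - Fe
    have hstep4 : ∀ s : ℝ, (Measure.map W P) {w : ℝ | s < w} = 1 - Fe s := by
      intro s
      have h1 : {w : ℝ | s < w} = (Set.Iic s)ᶜ := by ext w; simp
      have h2 : (Measure.map W P) (Set.Iic s) = Fe s := by
        rw [Measure.map_apply hW_meas measurableSet_Iic]
        rfl
      rw [h1, measure_compl measurableSet_Iic (measure_ne_top _ _), measure_univ, h2]
    -- step 5 : pull the subtraction out
    have hfin : ∫⁻ q, Fe (t * ∑ i, c i * q i) ∂μ ≠ ⊤ := by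
      refine ne_top_of_le_ne_top (by simp : (1:ENNReal) ≠ ⊤) ?_
      calc ∫⁻ q, Fe (t * ∑ i, c i * q i) ∂μ
          ≤ ∫⁻ _, 1 ∂μ := lintegral_mono fun q => hFe_le_one _
        _ = 1 := by simp
    have hstep5 : ∫⁻ q, (1 - Fe (t * ∑ i, c i * q i)) ∂μ = 1 - fT c := by
      rw [MeasureTheory.lintegral_sub (hg_meas c) hfin
        (Filter.Eventually.of_forall fun q => hFe_le_one _),
        MeasureTheory.lintegral_one, measure_univ]
    rw [hstep1, hstep2, hstep3]
    have hcong : ∫⁻ q, (Measure.map W P) {w : ℝ | t * ∑ i, c i * q i < w} ∂μ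
        = ∫⁻ q, (1 - Fe (t * ∑ i, c i * q i)) ∂μ := lintegral_congr fun q => hstep4 _
    rw [hcong]
    exact hstep5
  rw [hkey a ha_nn hpos, hkey b hb_nn hsum_b_pos]
  exact tsub_le_tsub_left hfT_compare 1
end

section
/- Let F be the cdf of a positive random variable unimodal at 0 (F(0)=0 and F concave on (0,∞)), and for each k let V_{k1}, ..., V_{kk} be i.i.d. with cdf F. Define h_k = P[V_{k1} >= (1/k) sum_{l=1}^k V_{kl}]. Then the sequence (h_k) is monotone non-increasing: h_{k+1} <= h_k for every k >= 1. -/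
open MeasureTheory ProbabilityTheory Finset ENNReal

section Aux

variable {Ω : Type*} [MeasurableSpace Ω] (P : Measure Ω) [IsProbabilityMeasure P]
  (V : ℕ → Ω → ℝ)

private lemma aux_sum_meas (hV_meas : ∀ i, Measurable (V i)) (u : Finset ℕ) :
    Measurable (fun ω => ∑ l ∈ u, V l ω) :=
  Finset.measurable_sum _ (fun i _ => hV_meas i)

private lemma aux_indep (hV_meas : ∀ i, Measurable (V i))
    (hV_indep : iIndepFun V P) {a : ℕ} {u : Finset ℕ} (hau : a ∉ u) :
    IndepFun (fun ω => ∑ l ∈ u, V l ω) (V a) P := by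
  have := hV_indep.indepFun_finsetSum_of_notMem hV_meas hau
  rwa [Finset.sum_fn] at this

private lemma aux_key (hV_meas : ∀ i, Measurable (V i))
    (hV_indep : iIndepFun V P) (a : ℕ) (u : Finset ℕ) (hau : a ∉ u) :
    P.map (fun ω => V a ω + ∑ l ∈ u, V l ω)
      = ((P.map (V a)).prod (P.map (fun ω => ∑ l ∈ u, V l ω))).map
          (fun p : ℝ × ℝ => p.1 + p.2) := by
  have hS : Measurable (fun ω => ∑ l ∈ u, V l ω) := aux_sum_meas V hV_meas u
  have hind : IndepFun (V a) (fun ω => ∑ l ∈ u, V l ω) P :=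
    (aux_indep P V hV_meas hV_indep hau).symm
  have hjoint : P.map (fun ω => (V a ω, ∑ l ∈ u, V l ω))
      = (P.map (V a)).prod (P.map (fun ω => ∑ l ∈ u, V l ω)) :=
    (indepFun_iff_map_prod_eq_prod_map_map (hV_meas a).aemeasurable hS.aemeasurable).1 hind
  calc P.map (fun ω => V a ω + ∑ l ∈ u, V l ω)
      = (P.map (fun ω => (V a ω, ∑ l ∈ u, V l ω))).map (fun p : ℝ × ℝ => p.1 + p.2) := by
        rw [Measure.map_map (g := fun p : ℝ × ℝ => p.1 + p.2) (measurable_fst.add measurable_snd) ((hV_meas a).prodMk hS)]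
        rfl
    _ = ((P.map (V a)).prod (P.map (fun ω => ∑ l ∈ u, V l ω))).map
          (fun p : ℝ × ℝ => p.1 + p.2) := by rw [hjoint]

private lemma aux_inv (hV_meas : ∀ i, Measurable (V i))
    (hV_indep : iIndepFun V P)
    (hV_ident : ∀ i j, IdentDistrib (V i) (V j) P P) :
    ∀ (n : ℕ) (u u' : Finset ℕ), u.card = n → u'.card = n →
      P.map (fun ω => ∑ l ∈ u, V l ω) = P.map (fun ω => ∑ l ∈ u', V l ω) := by
  intro n
  induction n with
  | zero =>
    intro u u' hu hu'
    rw [Finset.card_eq_zero] at hu hu'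
    subst hu; subst hu'; simp
  | succ n ih =>
    intro u u' hu hu'
    obtain ⟨a, ha⟩ : u.Nonempty := Finset.card_pos.1 (by omega)
    obtain ⟨b, hb⟩ : u'.Nonempty := Finset.card_pos.1 (by omega)
    have h1 : (fun ω => ∑ l ∈ u, V l ω) = fun ω => V a ω + ∑ l ∈ u.erase a, V l ω := by
      funext ω; exact (Finset.add_sum_erase u (fun l => V l ω) ha).symm
    have h2 : (fun ω => ∑ l ∈ u', V l ω) = fun ω => V b ω + ∑ l ∈ u'.erase b, V l ω := by
      funext ω; exact (Finset.add_sum_erase u' (fun l => V l ω) hb).symm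
    rw [h1, h2, aux_key P V hV_meas hV_indep a (u.erase a) (Finset.notMem_erase a u),
      aux_key P V hV_meas hV_indep b (u'.erase b) (Finset.notMem_erase b u'),
      (hV_ident a b).map_eq,
      ih (u.erase a) (u'.erase b) (by simp [Finset.card_erase_of_mem ha, hu])
        (by simp [Finset.card_erase_of_mem hb, hu'])]

private lemma aux_G_anti : Antitone (fun t => P {ω | t ≤ V 0 ω}) := by
  intro t t' htt'
  exact measure_mono (fun ω hω => le_trans htt' hω)

private lemma aux_fac (hV_meas : ∀ i, Measurable (V i))
    (hV_indep : iIndepFun V P)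
    (u : Finset ℕ) (h0u : 0 ∉ u) (c : ℝ) (hc : 0 < c) :
    P {ω | (∑ l ∈ u, V l ω) ≤ c * V 0 ω}
      = ∫⁻ x, P {ω | x / c ≤ V 0 ω} ∂(P.map (fun ω => ∑ l ∈ u, V l ω)) := by
  have hS : Measurable (fun ω => ∑ l ∈ u, V l ω) := aux_sum_meas V hV_meas u
  have hind : IndepFun (fun ω => ∑ l ∈ u, V l ω) (V 0) P :=
    aux_indep P V hV_meas hV_indep h0u
  have hjoint : P.map (fun ω => (∑ l ∈ u, V l ω, V 0 ω))
      = (P.map (fun ω => ∑ l ∈ u, V l ω)).prod (P.map (V 0)) :=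
    (indepFun_iff_map_prod_eq_prod_map_map hS.aemeasurable (hV_meas 0).aemeasurable).1 hind
  have hEmeas : MeasurableSet {p : ℝ × ℝ | p.1 ≤ c * p.2} :=
    measurableSet_le measurable_fst (measurable_snd.const_mul c)
  have hset : {ω | (∑ l ∈ u, V l ω) ≤ c * V 0 ω}
      = (fun ω => (∑ l ∈ u, V l ω, V 0 ω)) ⁻¹' {p : ℝ × ℝ | p.1 ≤ c * p.2} := rfl
  rw [hset, ← Measure.map_apply (hS.prodMk (hV_meas 0)) hEmeas, hjoint,
    Measure.prod_apply hEmeas]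
  refine lintegral_congr fun x => ?_
  have hslice : (Prod.mk x ⁻¹' {p : ℝ × ℝ | p.1 ≤ c * p.2}) = Set.Ici (x / c) := by
    ext y
    simp only [Set.mem_preimage, Set.mem_setOf_eq, Set.mem_Ici, div_le_iff₀ hc, mul_comm]
  rw [hslice, Measure.map_apply (hV_meas 0) measurableSet_Ici]
  rfl

private lemma aux_G_eq (hV_meas : ∀ i, Measurable (V i))
    (F : ℝ → ℝ) (hF_cdf : ∀ i t, F t = (P {ω | V i ω ≤ t}).toReal)
    (hF_conc : ConcaveOn ℝ (Set.Ioi 0) F) :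
    ∀ t : ℝ, 0 < t → P {ω | t ≤ V 0 ω} = ENNReal.ofReal (1 - F t) := by
  intro t ht
  set u : ℕ → ℝ := fun n => t - t / (n + 2) with hu_def
  have hu_lt : ∀ n, u n < t := by
    intro n
    have : 0 < t / ((n : ℝ) + 2) := by positivity
    simp only [hu_def]; linarith
  have hu_pos : ∀ n, 0 < u n := by
    intro n
    have h2 : (1 : ℝ) < (n : ℝ) + 2 := by
      have : (0:ℝ) ≤ (n : ℝ) := Nat.cast_nonneg n
      linarith
    have : t / ((n : ℝ) + 2) < t := div_lt_self ht h2
    simp only [hu_def]; linarith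
  have hu_mono : Monotone u := by
    intro a b hab
    have hab' : ((a : ℝ) + 2) ≤ ((b : ℝ) + 2) := by
      have : (a : ℝ) ≤ (b : ℝ) := Nat.cast_le.2 hab
      linarith
    have : t / ((b : ℝ) + 2) ≤ t / ((a : ℝ) + 2) := by
      apply div_le_div_of_nonneg_left ht.le (by positivity) hab'
    simp only [hu_def]; linarith
  have hu_tend : Filter.Tendsto u Filter.atTop (nhds t) := by
    have h1 : Filter.Tendsto (fun n : ℕ => ((n : ℝ) + 2)) Filter.atTop Filter.atTop :=
      Filter.tendsto_atTop_add_const_right _ 2 tendsto_natCast_atTop_atTop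
    have h2 : Filter.Tendsto (fun n : ℕ => t / ((n : ℝ) + 2)) Filter.atTop (nhds 0) :=
      Filter.Tendsto.div_atTop tendsto_const_nhds h1
    have h3 := Filter.Tendsto.sub (tendsto_const_nhds (x := t) (f := Filter.atTop)) h2
    simpa using h3
  -- P {V 0 < t} = ofReal (F t)
  have hIio : P {ω | V 0 ω < t} = ENNReal.ofReal (F t) := by
    set A : ℕ → Set Ω := fun n => {ω | V 0 ω ≤ u n} with hA_def
    have hA_mono : Monotone A := by
      intro a b hab ω hω
      exact le_trans hω (hu_mono hab)
    have hA_union : (⋃ n, A n) = {ω | V 0 ω < t} := by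
      ext ω
      simp only [Set.mem_iUnion, hA_def, Set.mem_setOf_eq]
      constructor
      · rintro ⟨n, hn⟩; exact lt_of_le_of_lt hn (hu_lt n)
      · intro hω
        obtain ⟨n, hn⟩ := (hu_tend.eventually (eventually_gt_nhds hω)).exists
        exact ⟨n, hn.le⟩
    have htend1 : Filter.Tendsto (fun n => P (A n)) Filter.atTop (nhds (P {ω | V 0 ω < t})) := by
      have := tendsto_measure_iUnion_atTop (μ := P) hA_mono
      rwa [hA_union] at this
    have hval : ∀ n, P (A n) = ENNReal.ofReal (F (u n)) := by
      intro n
      rw [hF_cdf 0 (u n), ENNReal.ofReal_toReal (measure_ne_top P _)]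
    have hcontF : ContinuousOn F (Set.Ioi 0) := hF_conc.continuousOn isOpen_Ioi
    have hFu : Filter.Tendsto (fun n => F (u n)) Filter.atTop (nhds (F t)) := by
      have hcw : ContinuousWithinAt F (Set.Ioi 0) t := hcontF t ht
      refine hcw.tendsto.comp ?_
      rw [tendsto_nhdsWithin_iff]
      exact ⟨hu_tend, Filter.Eventually.of_forall fun n => hu_pos n⟩
    have htend2 : Filter.Tendsto (fun n => P (A n)) Filter.atTop
        (nhds (ENNReal.ofReal (F t))) := by
      simp only [hval]
      exact (ENNReal.continuous_ofReal.tendsto _).comp hFu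
    exact tendsto_nhds_unique htend1 htend2
  have hcompl : {ω | t ≤ V 0 ω} = {ω | V 0 ω < t}ᶜ := by
    ext ω; simp [not_lt]
  have hmeas : MeasurableSet {ω | V 0 ω < t} := by
    have : {ω | V 0 ω < t} = V 0 ⁻¹' Set.Iio t := rfl
    rw [this]; exact (hV_meas 0) measurableSet_Iio
  have hFt : 0 ≤ F t := by rw [hF_cdf 0 t]; exact ENNReal.toReal_nonneg
  rw [hcompl, prob_compl_eq_one_sub hmeas, hIio, ENNReal.ofReal_sub 1 hFt,
    ENNReal.ofReal_one]

end Aux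

theorem maximal_depth_antitone
    {Ω : Type*} [MeasurableSpace Ω] (P : Measure Ω) [IsProbabilityMeasure P]
    (V : ℕ → Ω → ℝ) (hV_meas : ∀ i, Measurable (V i))
    (hV_indep : iIndepFun V P)
    (hV_ident : ∀ i j, IdentDistrib (V i) (V j) P P)
    (hV_pos : ∀ i, ∀ᵐ ω ∂P, 0 < V i ω)
    (F : ℝ → ℝ) (hF_cdf : ∀ i t, F t = (P {ω | V i ω ≤ t}).toReal)
    (hF0 : F 0 = 0) (hF_conc : ConcaveOn ℝ (Set.Ioi 0) F)
    (h : ℕ → ℝ≥0∞)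
    (hh : ∀ j, h j = P {ω | (1 / (j : ℝ)) * ∑ l ∈ Finset.range j, V l ω ≤ V 0 ω}) :
    ∀ j, 1 ≤ j → h (j + 1) ≤ h j := by
  -- rewrite h (m+1) in terms of the sum over Icc 1 m
  have hrew : ∀ m : ℕ, h (m + 1)
      = P {ω | (∑ l ∈ Finset.Icc 1 m, V l ω) ≤ (m : ℝ) * V 0 ω} := by
    intro m
    rw [hh (m + 1)]
    congr 1
    ext ω
    have hins : Finset.range (m + 1) = insert 0 (Finset.Icc 1 m) := by
      ext l; simp only [Finset.mem_range, Finset.mem_insert, Finset.mem_Icc]; omega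
    have h0ni : (0 : ℕ) ∉ Finset.Icc 1 m := by simp
    have hsum : ∑ l ∈ Finset.range (m + 1), V l ω
        = V 0 ω + ∑ l ∈ Finset.Icc 1 m, V l ω := by
      rw [hins, Finset.sum_insert h0ni]
    have hm1 : (0 : ℝ) < ((m : ℝ) + 1) := by positivity
    simp only [Set.mem_setOf_eq, hsum]
    push_cast
    rw [one_div, inv_mul_le_iff₀ hm1]
    constructor <;> intro hineq <;> nlinarith
  intro j hj
  obtain ⟨m, rfl⟩ : ∃ m, j = m + 1 := ⟨j - 1, by omega⟩
  rw [hrew (m + 1), hrew m]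
  rcases Nat.eq_zero_or_pos m with hm0 | hm
  · subst hm0
    have : {ω | (∑ l ∈ Finset.Icc 1 0, V l ω) ≤ ((0 : ℕ) : ℝ) * V 0 ω} = Set.univ := by
      ext ω; simp
    rw [this, measure_univ]
    exact prob_le_one
  -- main case : m ≥ 1
  set G : ℝ → ℝ≥0∞ := fun t => P {ω | t ≤ V 0 ω} with hG_def
  have hGanti : Antitone G := aux_G_anti P V
  have hGmeas : Measurable G := hGanti.measurable
  have hGeq : ∀ t : ℝ, 0 < t → G t = ENNReal.ofReal (1 - F t) :=
    aux_G_eq P V hV_meas F hF_cdf hF_conc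
  set s : Finset ℕ := Finset.Icc 1 (m + 1) with hs_def
  have hs_card : s.card = m + 1 := by rw [hs_def, Nat.card_Icc]; omega
  have h0s : (0 : ℕ) ∉ s := by simp [hs_def]
  have hc : (0 : ℝ) < ((m + 1 : ℕ) : ℝ) := by positivity
  have hmr : (0 : ℝ) < ((m : ℕ) : ℝ) := by exact_mod_cast hm
  have hSmeas : ∀ u : Finset ℕ, Measurable (fun ω => ∑ l ∈ u, V l ω) :=
    fun u => aux_sum_meas V hV_meas u
  have hg : ∀ u : Finset ℕ, ∀ c : ℝ, Measurable (fun x : ℝ => G (x / c)) :=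
    fun u c => hGmeas.comp (measurable_id.div_const c)
  -- factorization of both sides
  have hLHS : P {ω | (∑ l ∈ s, V l ω) ≤ ((m + 1 : ℕ) : ℝ) * V 0 ω}
      = ∫⁻ ω, G ((∑ l ∈ s, V l ω) / ((m + 1 : ℕ) : ℝ)) ∂P := by
    rw [aux_fac P V hV_meas hV_indep s h0s _ hc,
      lintegral_map (hg s _) (hSmeas s)]
  have hRHS : ∀ u : Finset ℕ, 0 ∉ u → u.card = m →
      ∫⁻ ω, G ((∑ l ∈ u, V l ω) / ((m : ℕ) : ℝ)) ∂P
        = P {ω | (∑ l ∈ Finset.Icc 1 m, V l ω) ≤ ((m : ℕ) : ℝ) * V 0 ω} := by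
    intro u h0u hcard
    rw [aux_fac P V hV_meas hV_indep (Finset.Icc 1 m) (by simp) _ hmr,
      ← aux_inv P V hV_meas hV_indep hV_ident m u (Finset.Icc 1 m) hcard (by rw [Nat.card_Icc]; omega),
      lintegral_map (hg u _) (hSmeas u)]
  rw [hLHS]
  -- pointwise Jensen bound, a.e.
  have hae : ∀ᵐ ω ∂P, ∀ l ∈ s, 0 < V l ω := by
    have := (ae_ball_iff (Set.to_countable (↑s : Set ℕ))).2
      (fun l (_ : l ∈ (↑s : Set ℕ)) => hV_pos l)
    filter_upwards [this] with ω hω l hl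
    exact hω l hl
  have hgconv : ConvexOn ℝ (Set.Ioi 0) (fun t => 1 - F t) := by
    have h1 : ConvexOn ℝ (Set.Ioi 0) (-F) := hF_conc.neg
    have h2 := h1.add_const 1
    have h3 : (fun t => 1 - F t) = (-F + fun _ => 1) := by
      funext t; simp [sub_eq_neg_add]
    rw [h3]; exact h2
  have hF_le_one : ∀ t : ℝ, F t ≤ 1 := by
    intro t
    rw [hF_cdf 0 t]
    calc (P {ω | V 0 ω ≤ t}).toReal ≤ (1 : ℝ≥0∞).toReal :=
          ENNReal.toReal_mono ENNReal.one_ne_top prob_le_one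
      _ = 1 := by simp
  have hw : (0:ℝ) ≤ 1 / ((m + 1 : ℕ) : ℝ) := by positivity
  have hptwise : ∀ᵐ ω ∂P, G ((∑ l ∈ s, V l ω) / ((m + 1 : ℕ) : ℝ))
      ≤ ∑ i ∈ s, ENNReal.ofReal (1 / ((m + 1 : ℕ) : ℝ))
          * G ((∑ l ∈ s.erase i, V l ω) / ((m : ℕ) : ℝ)) := by
    filter_upwards [hae] with ω hω
    set T : ℝ := ∑ l ∈ s, V l ω with hT_def
    have hT_pos : 0 < T := Finset.sum_pos (fun l hl => hω l hl) ⟨1, by simp only [hs_def, Finset.mem_Icc]; omega⟩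
    have hx_pos : ∀ i ∈ s, 0 < (∑ l ∈ s.erase i, V l ω) / ((m : ℕ) : ℝ) := by
      intro i hi
      apply div_pos _ hmr
      apply Finset.sum_pos (fun l hl => hω l (Finset.erase_subset _ _ hl))
      rw [← Finset.card_pos, Finset.card_erase_of_mem hi, hs_card]
      omega
    have hcomb : ∑ i ∈ s, (1 / ((m + 1 : ℕ) : ℝ))
        • ((∑ l ∈ s.erase i, V l ω) / ((m : ℕ) : ℝ)) = T / ((m + 1 : ℕ) : ℝ) := by
      have herase : ∀ i ∈ s, ∑ l ∈ s.erase i, V l ω = T - V i ω := by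
        intro i hi
        rw [hT_def, Finset.sum_erase_eq_sub hi]
      rw [Finset.sum_congr rfl (fun i hi => by rw [herase i hi])]
      have hsub : ∑ i ∈ s, (1 / ((m + 1 : ℕ) : ℝ)) • ((T - V i ω) / ((m : ℕ) : ℝ))
          = (1 / ((m + 1 : ℕ) : ℝ)) * ((1 / ((m : ℕ) : ℝ))
            * (∑ i ∈ s, (T - V i ω))) := by
        simp only [smul_eq_mul, Finset.mul_sum]
        refine Finset.sum_congr rfl fun i _ => ?_
        ring
      rw [hsub, Finset.sum_sub_distrib, Finset.sum_const, hs_card, ← hT_def]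
      field_simp
      ring
    have hJ := hgconv.map_sum_le (t := s)
      (w := fun _ => 1 / ((m + 1 : ℕ) : ℝ))
      (p := fun i => (∑ l ∈ s.erase i, V l ω) / ((m : ℕ) : ℝ))
      (fun i _ => hw)
      (by rw [Finset.sum_const, hs_card, nsmul_eq_mul]; field_simp)
      hx_pos
    rw [hcomb] at hJ
    have hTc_pos : 0 < T / ((m + 1 : ℕ) : ℝ) := div_pos hT_pos hc
    rw [hGeq _ hTc_pos]
    calc ENNReal.ofReal (1 - F (T / ((m + 1 : ℕ) : ℝ)))
        ≤ ENNReal.ofReal (∑ i ∈ s, (1 / ((m + 1 : ℕ) : ℝ))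
            • (1 - F ((∑ l ∈ s.erase i, V l ω) / ((m : ℕ) : ℝ)))) :=
          ENNReal.ofReal_le_ofReal hJ
      _ = ∑ i ∈ s, ENNReal.ofReal ((1 / ((m + 1 : ℕ) : ℝ))
            * (1 - F ((∑ l ∈ s.erase i, V l ω) / ((m : ℕ) : ℝ)))) := by
          rw [show (∑ i ∈ s, (1 / ((m + 1 : ℕ) : ℝ))
              • (1 - F ((∑ l ∈ s.erase i, V l ω) / ((m : ℕ) : ℝ))))
            = ∑ i ∈ s, (1 / ((m + 1 : ℕ) : ℝ))
              * (1 - F ((∑ l ∈ s.erase i, V l ω) / ((m : ℕ) : ℝ))) from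
            Finset.sum_congr rfl fun i _ => by rw [smul_eq_mul]]
          exact ENNReal.ofReal_sum_of_nonneg fun i hi =>
            mul_nonneg hw (by linarith [hF_le_one ((∑ l ∈ s.erase i, V l ω) / ((m : ℕ) : ℝ))])
      _ = ∑ i ∈ s, ENNReal.ofReal (1 / ((m + 1 : ℕ) : ℝ))
            * G ((∑ l ∈ s.erase i, V l ω) / ((m : ℕ) : ℝ)) := by
          refine Finset.sum_congr rfl fun i hi => ?_
          rw [ENNReal.ofReal_mul hw, hGeq _ (hx_pos i hi)]
  calc ∫⁻ ω, G ((∑ l ∈ s, V l ω) / ((m + 1 : ℕ) : ℝ)) ∂P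
      ≤ ∫⁻ ω, ∑ i ∈ s, ENNReal.ofReal (1 / ((m + 1 : ℕ) : ℝ))
          * G ((∑ l ∈ s.erase i, V l ω) / ((m : ℕ) : ℝ)) ∂P := lintegral_mono_ae hptwise
    _ = ∑ i ∈ s, ENNReal.ofReal (1 / ((m + 1 : ℕ) : ℝ))
          * ∫⁻ ω, G ((∑ l ∈ s.erase i, V l ω) / ((m : ℕ) : ℝ)) ∂P := by
        have hmi : ∀ i : ℕ, Measurable fun ω =>
            G ((∑ l ∈ s.erase i, V l ω) / ((m : ℕ) : ℝ)) :=
          fun i => (hg (s.erase i) ((m : ℕ) : ℝ)).comp (hSmeas (s.erase i))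
        rw [lintegral_finset_sum]
        · exact Finset.sum_congr rfl fun i _ => by
            rw [lintegral_const_mul _ (hmi i)]
        · intro i _
          exact (hmi i).const_mul _
    _ = ∑ i ∈ s, ENNReal.ofReal (1 / ((m + 1 : ℕ) : ℝ))
          * P {ω | (∑ l ∈ Finset.Icc 1 m, V l ω) ≤ ((m : ℕ) : ℝ) * V 0 ω} := by
        refine Finset.sum_congr rfl fun i hi => ?_
        rw [hRHS (s.erase i) (fun hmem => h0s (Finset.erase_subset _ _ hmem))
          (by rw [Finset.card_erase_of_mem hi, hs_card]; omega)]
    _ = P {ω | (∑ l ∈ Finset.Icc 1 m, V l ω) ≤ ((m : ℕ) : ℝ) * V 0 ω} := by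
        rw [Finset.sum_const, hs_card, nsmul_eq_mul]
        have : ENNReal.ofReal (1 / ((m + 1 : ℕ) : ℝ)) = ((m + 1 : ℕ) : ℝ≥0∞)⁻¹ := by
          rw [one_div, ENNReal.ofReal_inv_of_pos hc, ENNReal.ofReal_natCast]
        rw [this, ← mul_assoc, ENNReal.mul_inv_cancel (by exact_mod_cast Nat.succ_ne_zero m)
          (ENNReal.natCast_ne_top _), one_mul]
end

section
/- Let V_1, V_2, ... be i.i.d. positive integrable random variables with continuous cdf F, and set h_k = P[V_1 >= (1/k) sum_{l=1}^k V_l]. Then h_k converges as k → ∞ to h_∞ = P[V_1 >= E[V_1]]. -/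
open MeasureTheory ProbabilityTheory Finset ENNReal

theorem maximal_depth_tendsto
    {Ω : Type*} [MeasurableSpace Ω] (P : Measure Ω) [IsProbabilityMeasure P]
    (V : ℕ → Ω → ℝ) (hV_meas : ∀ i, Measurable (V i))
    (hV_indep : iIndepFun V P)
    (hV_ident : ∀ i j, IdentDistrib (V i) (V j) P P)
    (hV_pos : ∀ i, ∀ᵐ ω ∂P, 0 < V i ω)
    (hV_int : Integrable (V 0) P)
    -- the common cdf is continuous, i.e. there are no atoms
    (hV_cont : ∀ t : ℝ, P {ω | V 0 ω = t} = 0) :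
    Filter.Tendsto
      (fun j : ℕ => (P {ω | (1 / (j : ℝ)) * ∑ l ∈ Finset.range j, V l ω ≤ V 0 ω}).toReal)
      Filter.atTop
      (nhds ((P {ω | ∫ x, V 0 x ∂P ≤ V 0 ω}).toReal)) := by
  set μ : ℝ := ∫ x, V 0 x ∂P with hμ
  have hslln : ∀ᵐ ω ∂P,
      Filter.Tendsto (fun n : ℕ => (∑ i ∈ Finset.range n, V i ω) / n)
        Filter.atTop (nhds μ) :=
    strong_law_ae_real V hV_int
      (fun i j hij => hV_indep.indepFun hij) (fun i => hV_ident i 0)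
  have hmeasA : ∀ j : ℕ, MeasurableSet
      {ω | (1 / (j : ℝ)) * ∑ l ∈ Finset.range j, V l ω ≤ V 0 ω} := by
    intro j
    exact measurableSet_le (by measurability) (hV_meas 0)
  have hmeas_lim : MeasurableSet {ω | μ ≤ V 0 ω} :=
    measurableSet_le measurable_const (hV_meas 0)
  have hlim : ∀ᵐ ω ∂P, ∀ᶠ j : ℕ in Filter.atTop,
      (ω ∈ {ω | (1 / (j : ℝ)) * ∑ l ∈ Finset.range j, V l ω ≤ V 0 ω}) ↔
      (ω ∈ {ω | μ ≤ V 0 ω}) := by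
    have hne : ∀ᵐ ω ∂P, V 0 ω ≠ μ := by
      rw [ae_iff]; simpa using hV_cont μ
    filter_upwards [hslln, hne] with ω hω hωne
    rcases lt_or_gt_of_ne hωne with hlt | hgt
    · -- V 0 ω < μ : eventually avg > V 0 ω, and μ ≤ V 0 ω is false
      have h1 : ∀ᶠ j : ℕ in Filter.atTop,
          V 0 ω < (∑ i ∈ Finset.range j, V i ω) / j :=
        hω.eventually_const_lt hlt
      filter_upwards [h1] with j hj
      constructor
      · intro h
        exfalso
        rw [one_div, inv_mul_eq_div] at h
        exact absurd (lt_of_lt_of_le hj h) (lt_irrefl _)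
      · intro h; exact absurd h (not_le.mpr hlt)
    · -- μ < V 0 ω : eventually avg < V 0 ω
      have h1 : ∀ᶠ j : ℕ in Filter.atTop,
          (∑ i ∈ Finset.range j, V i ω) / j < V 0 ω :=
        hω.eventually_lt_const hgt
      filter_upwards [h1] with j hj
      show _ ↔ _
      rw [one_div, inv_mul_eq_div]
      exact ⟨fun _ => hgt.le, fun _ => hj.le⟩
  have := tendsto_measure_of_ae_tendsto_indicator_of_isFiniteMeasure
      (A := {ω | μ ≤ V 0 ω}) (μ := P) Filter.atTop hmeas_lim hmeasA hlim
  exact (ENNReal.tendsto_toReal (measure_ne_top P _)).comp this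
end

section
/- Let F be the cdf of a positive random variable unimodal at 0, and let V_1, ..., V_k be i.i.d. with cdf F. For any integer m with 1 <= m <= k-1 and any nonnegative weights d_{m+1}, ..., d_k summing to 1, P[V_m >= sum_{l=m+1}^k d_l V_l] >= P[V_m >= (1/(k-m)) sum_{l=m+1}^k V_l]. -/
open MeasureTheory ProbabilityTheory Finset ENNReal


lemma indep_le_eq_lintegral {Ω : Type*} [MeasurableSpace Ω] (P : Measure Ω) [IsProbabilityMeasure P]
    (X Y : Ω → ℝ) (hX : Measurable X) (hY : Measurable Y) (h : IndepFun X Y P) :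
    P {ω | X ω ≤ Y ω} = ∫⁻ ω, (P.map Y) (Set.Ici (X ω)) ∂P := by
  have hmap : P.map (fun ω => (X ω, Y ω)) = (P.map X).prod (P.map Y) :=
    (indepFun_iff_map_prod_eq_prod_map_map hX.aemeasurable hY.aemeasurable).mp h
  have hs : MeasurableSet {p : ℝ × ℝ | p.1 ≤ p.2} :=
    measurableSet_le measurable_fst measurable_snd
  have h1 : P {ω | X ω ≤ Y ω}
      = P.map (fun ω => (X ω, Y ω)) {p : ℝ × ℝ | p.1 ≤ p.2} := by
    rw [Measure.map_apply (hX.prodMk hY) hs]; rfl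
  have hmg : Measurable fun x : ℝ => (P.map Y) (Set.Ici x) :=
    Antitone.measurable (fun a b hab => measure_mono (Set.Ici_subset_Ici.mpr hab))
  rw [h1, hmap, Measure.prod_apply hs, ← lintegral_map hmg hX]
  rfl


lemma aux_convexOn_Ici (ν : Measure ℝ) [IsProbabilityMeasure ν] (F : ℝ → ℝ)
    (hF : ∀ t, F t = (ν (Set.Iic t)).toReal)
    (hconc : ConcaveOn ℝ (Set.Ioi 0) F) :
    ConvexOn ℝ (Set.Ioi 0) (fun x => (ν (Set.Ici x)).toReal) := by
  have hcont : ContinuousOn F (Set.Ioi 0) := hconc.continuousOn isOpen_Ioi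
  -- no atoms on (0,∞)
  have hatom : ∀ x : ℝ, x ∈ Set.Ioi 0 → ν {x} = 0 := by
    intro x hx
    have hne : (ν {x}) ≠ ⊤ := measure_ne_top _ _
    have hbd : ∀ᶠ y in nhdsWithin x (Set.Iio x), (ν {x}).toReal ≤ F x - F y := by
      have hmem : Set.Ioi (0:ℝ) ∈ nhdsWithin x (Set.Iio x) :=
        mem_nhdsWithin_of_mem_nhds (isOpen_Ioi.mem_nhds hx)
      filter_upwards [self_mem_nhdsWithin, hmem] with y hy hy0
      have hsub : ({x} : Set ℝ) ⊆ Set.Iic x \ Set.Iic y := by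
        intro z hz; rcases hz with rfl
        exact ⟨Set.mem_Iic.mpr le_rfl, fun hc => absurd (Set.mem_Iic.mp hc) (not_le.mpr hy)⟩
      have hmono : ν (Set.Iic y) ≤ ν (Set.Iic x) :=
        measure_mono (Set.Iic_subset_Iic.mpr (le_of_lt hy))
      have hdiff : ν (Set.Iic x \ Set.Iic y) = ν (Set.Iic x) - ν (Set.Iic y) :=
        measure_diff (Set.Iic_subset_Iic.mpr (le_of_lt hy)) measurableSet_Iic.nullMeasurableSet
          (measure_ne_top _ _)
      have h1 : (ν {x}).toReal ≤ (ν (Set.Iic x \ Set.Iic y)).toReal :=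
        ENNReal.toReal_mono (measure_ne_top _ _) (measure_mono hsub)
      rw [hdiff, ENNReal.toReal_sub_of_le hmono (measure_ne_top _ _)] at h1
      rw [hF x, hF y]; exact h1
    have htd : Filter.Tendsto (fun y => F x - F y) (nhdsWithin x (Set.Iio x)) (nhds 0) := by
      have h0 : Filter.Tendsto F (nhdsWithin x (Set.Ioi 0)) (nhds (F x)) := hcont x hx
      have hle : nhdsWithin x (Set.Iio x) ≤ nhdsWithin x (Set.Ioi 0) :=
        nhdsWithin_le_of_mem (mem_nhdsWithin_of_mem_nhds (isOpen_Ioi.mem_nhds hx))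
      have := (h0.mono_left hle).const_sub (F x)
      simpa using this
    have hc0 : (ν {x}).toReal ≤ 0 := ge_of_tendsto htd hbd
    have : (ν {x}).toReal = 0 := le_antisymm hc0 ENNReal.toReal_nonneg
    exact (ENNReal.toReal_eq_zero_iff _).mp this |>.resolve_right hne
  -- identify with 1 - F on Ioi 0
  have heq : ∀ x : ℝ, x ∈ Set.Ioi 0 → (ν (Set.Ici x)).toReal = 1 - F x := by
    intro x hx
    have h1 : ν (Set.Ici x) = ν (Set.Ioi x) := by
      have : Set.Ici x = {x} ∪ Set.Ioi x := by
        ext z; simp [Set.mem_Ici, Set.mem_Ioi, le_iff_lt_or_eq, or_comm, eq_comm]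
      have hdisj : Disjoint ({x} : Set ℝ) (Set.Ioi x) :=
        Set.disjoint_left.mpr (fun z hz hz2 => by
          rcases hz with rfl; exact lt_irrefl _ (Set.mem_Ioi.mp hz2))
      rw [this, measure_union hdisj measurableSet_Ioi, hatom x hx, zero_add]
    have h2 : ν (Set.Ioi x) = 1 - ν (Set.Iic x) := by
      rw [← Set.compl_Iic, measure_compl measurableSet_Iic (measure_ne_top _ _)]
      simp
    rw [h1, h2, ENNReal.toReal_sub_of_le prob_le_one (by simp), hF x]
    simp
  have hconv1 : ConvexOn ℝ (Set.Ioi 0) (fun x => 1 - F x) := by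
    have := hconc.neg
    have h2 : (fun x => 1 - F x) = fun x => (fun y => -F y) x + 1 := by
      funext y; ring
    rw [h2]
    exact this.add_const 1
  refine ⟨convex_Ioi 0, fun x hx y hy a b ha hb hab => ?_⟩
  have hin : a • x + b • y ∈ Set.Ioi 0 := (convex_Ioi 0) hx hy ha hb hab
  dsimp only
  rw [heq _ hin, heq _ hx, heq _ hy]
  simpa using hconv1.2 hx hy ha hb hab


lemma joint_law_pi {Ω : Type*} [MeasurableSpace Ω] (P : Measure Ω) [IsProbabilityMeasure P]
    (V : ℕ → Ω → ℝ) (hV_meas : ∀ i, Measurable (V i))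
    (hV_indep : iIndepFun V P)
    (μ : Measure ℝ) [SigmaFinite μ] (hμ : ∀ i, P.map (V i) = μ)
    (n : ℕ) (ρ : Fin n → ℕ) (hρ : Function.Injective ρ) :
    P.map (fun ω (j : Fin n) => V (ρ j) ω) = Measure.pi (fun _ => μ) := by
  classical
  have hmeas : Measurable (fun ω (j : Fin n) => V (ρ j) ω) :=
    measurable_pi_lambda _ (fun j => hV_meas (ρ j))
  refine (Measure.pi_eq fun s hs => ?_).symm
  rw [Measure.map_apply hmeas (MeasurableSet.univ_pi hs)]
  have hpre : (fun ω (j : Fin n) => V (ρ j) ω) ⁻¹' (Set.pi Set.univ s)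
      = ⋂ j : Fin n, V (ρ j) ⁻¹' s j := by
    ext ω; simp [Set.mem_pi]
  rw [hpre]
  set s' : ℕ → Set ℝ := fun i => if h : ∃ j, ρ j = i then s h.choose else Set.univ with hs'
  have hs'ρ : ∀ j : Fin n, s' (ρ j) = s j := by
    intro j
    have hex : ∃ j', ρ j' = ρ j := ⟨j, rfl⟩
    have : hex.choose = j := hρ hex.choose_spec
    simp [hs', dif_pos hex, this]
  have hbi : (⋂ j : Fin n, V (ρ j) ⁻¹' s j)
      = ⋂ i ∈ Finset.image ρ Finset.univ, V i ⁻¹' s' i := by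
    ext ω
    simp only [Set.mem_iInter, Finset.mem_image, Finset.mem_univ, true_and]
    constructor
    · rintro h i ⟨j, rfl⟩
      rw [hs'ρ j]; exact h j
    · intro h j
      have := h (ρ j) ⟨j, rfl⟩
      rwa [hs'ρ j] at this
  rw [hbi]
  have hmeass' : ∀ i, MeasurableSet (s' i) := by
    intro i
    show MeasurableSet (if h : ∃ j, ρ j = i then s h.choose else Set.univ)
    by_cases h : ∃ j, ρ j = i
    · rw [dif_pos h]; exact hs _
    · rw [dif_neg h]; exact MeasurableSet.univ
  rw [hV_indep.meas_biInter (fun i _ => ⟨s' i, hmeass' i, rfl⟩)]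
  rw [Finset.prod_image (fun j _ j' _ h => hρ h)]
  have : ∀ j : Fin n, P (V (ρ j) ⁻¹' s' (ρ j)) = μ (s j) := by
    intro j
    rw [hs'ρ j, ← hμ (ρ j), Measure.map_apply (hV_meas (ρ j)) (hs j)]
  rw [Finset.prod_congr rfl (fun j _ => this j)]

lemma sum_shift_base {M : Type*} [AddCommMonoid M] (m k n : ℕ) (hn : k + 1 - (m+1) = n)
    (f : ℕ → M) :
    ∑ l ∈ Finset.Icc (m + 1) k, f l = ∑ j : Fin n, f (m+1+(j:ℕ)) := by
  rw [← Finset.Ico_add_one_right_eq_Icc, Finset.sum_Ico_eq_sum_range, hn,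
    ← Fin.sum_univ_eq_sum_range (fun j => f (m+1+j)) n]


theorem weighted_sum_prob_ge_uniform
    {Ω : Type*} [MeasurableSpace Ω] (P : Measure Ω) [IsProbabilityMeasure P]
    (V : ℕ → Ω → ℝ) (hV_meas : ∀ i, Measurable (V i))
    (hV_indep : iIndepFun V P)
    (hV_ident : ∀ i j, IdentDistrib (V i) (V j) P P)
    (hV_pos : ∀ i, ∀ᵐ ω ∂P, 0 < V i ω)
    (F : ℝ → ℝ) (hF_cdf : ∀ i t, F t = (P {ω | V i ω ≤ t}).toReal)
    (hF0 : F 0 = 0) (hF_conc : ConcaveOn ℝ (Set.Ioi 0) F)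
    (k m : ℕ) (hm1 : 1 ≤ m) (hm2 : m ≤ k - 1)
    (d : ℕ → ℝ) (hd_nonneg : ∀ l ∈ Finset.Icc (m + 1) k, 0 ≤ d l)
    (hd_sum : ∑ l ∈ Finset.Icc (m + 1) k, d l = 1) :
    P {ω | ∑ l ∈ Finset.Icc (m + 1) k, (((k : ℝ) - m))⁻¹ * V l ω ≤ V m ω} ≤
      P {ω | ∑ l ∈ Finset.Icc (m + 1) k, d l * V l ω ≤ V m ω} := by
    classical
  have hmk : m + 1 ≤ k := by omega
  set n := k - m with hn
  have hn1 : 1 ≤ n := by omega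
  have hnc : k + 1 - (m+1) = n := by omega
  haveI : NeZero n := ⟨by omega⟩
  have hncast : ((k:ℝ) - m) = (n:ℝ) := by
    rw [hn, Nat.cast_sub (by omega)]
  set μ := P.map (V m) with hμdef
  haveI : IsProbabilityMeasure μ := Measure.isProbabilityMeasure_map (hV_meas m).aemeasurable
  have hμi : ∀ i, P.map (V i) = μ := fun i => (hV_ident i m).map_eq
  set G' : ℝ → ℝ≥0∞ := fun x => μ (Set.Ici x) with hG'def
  have hG'meas : Measurable G' :=
    Antitone.measurable (fun a b hab => measure_mono (Set.Ici_subset_Ici.mpr hab))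
  set W : (Fin n → ℝ) → Ω → ℝ := fun c ω => ∑ j : Fin n, c j * V (m+1+(j:ℕ)) ω with hWdef
  have hWmeas : ∀ c, Measurable (W c) :=
    fun c => Finset.measurable_sum _ (fun j _ => (hV_meas _).const_mul _)
  set d' : Fin n → ℝ := fun j => d (m+1+(j:ℕ)) with hd'def
  have hd'0 : ∀ j, 0 ≤ d' j := fun j => hd_nonneg _ (by
    simp only [Finset.mem_Icc]
    constructor
    · omega
    · have := j.isLt; omega)
  have hd'sum : ∑ j : Fin n, d' j = 1 := by
    rw [← sum_shift_base m k n hnc d]; exact hd_sum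
  set A : (Fin n → ℝ) → ℝ≥0∞ := fun c => P {ω | W c ω ≤ V m ω} with hAdef
  -- Step I : A c = ∫⁻ G' (W c)
  have hindep : ∀ c, IndepFun (W c) (V m) P := by
    intro c
    set S : Finset ℕ := Finset.image (fun j : Fin n => m+1+(j:ℕ)) Finset.univ with hSdef
    have hd : Disjoint S ({m} : Finset ℕ) := by
      rw [Finset.disjoint_left]
      intro a ha ham
      rw [Finset.mem_singleton] at ham
      rw [hSdef, Finset.mem_image] at ha
      obtain ⟨j, _, hj⟩ := ha
      omega
    have base := hV_indep.indepFun_finset S ({m} : Finset ℕ) hd hV_meas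
    have hmem : ∀ j : Fin n, (m+1+(j:ℕ)) ∈ S := fun j =>
      Finset.mem_image.mpr ⟨j, Finset.mem_univ j, rfl⟩
    set φ : ((i : S) → ℝ) → ℝ := fun v => ∑ j : Fin n, c j * v ⟨m+1+(j:ℕ), hmem j⟩ with hφdef
    have hφm : Measurable φ :=
      Finset.measurable_sum _ (fun j _ => (measurable_pi_apply _).const_mul _)
    set ψ : ((i : ({m} : Finset ℕ)) → ℝ) → ℝ := fun v => v ⟨m, Finset.mem_singleton_self m⟩
      with hψdef
    have hψm : Measurable ψ := measurable_pi_apply _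
    have := base.comp hφm hψm
    have heq1 : (φ ∘ fun a (i : S) => V i a) = W c := by funext ω; rfl
    have heq2 : (ψ ∘ fun a (i : ({m} : Finset ℕ)) => V i a) = V m := by funext ω; rfl
    rwa [heq1, heq2] at this
  have hA : ∀ c, A c = ∫⁻ ω, G' (W c ω) ∂P := by
    intro c
    exact indep_le_eq_lintegral P (W c) (V m) (hWmeas c) (hV_meas m) (hindep c)
  -- joint law
  have htuplemeas : Measurable (fun ω (j : Fin n) => V (m+1+(j:ℕ)) ω) :=
    measurable_pi_lambda _ (fun j => hV_meas _)
  have hlaw : P.map (fun ω (j : Fin n) => V (m+1+(j:ℕ)) ω) = Measure.pi (fun _ => μ) :=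
    joint_law_pi P V hV_meas hV_indep μ hμi n (fun j => m+1+(j:ℕ))
      (by
        intro a b h
        dsimp only at h
        exact Fin.val_injective (by omega))
  -- Step II : invariance under permutation of weights
  have hφm : ∀ c : Fin n → ℝ, Measurable (fun v : Fin n → ℝ => ∑ j : Fin n, c j * v j) :=
    fun c => Finset.measurable_sum _ (fun j _ => (measurable_pi_apply _).const_mul _)
  have hkey : ∀ c : Fin n → ℝ,
      A c = ∫⁻ x, G' x ∂((Measure.pi (fun _ : Fin n => μ)).map
        (fun v : Fin n → ℝ => ∑ j : Fin n, c j * v j)) := by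
    intro c
    rw [← hlaw, Measure.map_map (hφm c) htuplemeas,
      lintegral_map hG'meas ((hφm c).comp htuplemeas), hA c]
    rfl
  have hAinv : ∀ (c : Fin n → ℝ) (τ : Equiv.Perm (Fin n)), A (c ∘ τ) = A c := by
    intro c τ
    rw [hkey c, hkey (c ∘ τ)]
    have hcomp : (fun v : Fin n → ℝ => ∑ j : Fin n, (c ∘ τ) j * v j)
        = (fun v : Fin n → ℝ => ∑ j : Fin n, c j * v j)
          ∘ (MeasurableEquiv.piCongrLeft (fun _ : Fin n => ℝ) τ) := by
      funext v
      simp only [Function.comp_apply]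
      exact Fintype.sum_equiv τ _ _ (fun i => by
        rw [MeasurableEquiv.piCongrLeft_apply_apply])
    rw [hcomp, ← Measure.map_map (hφm c) (MeasurableEquiv.measurable _)]
    have hg := Measure.pi_map_piCongrLeft τ (fun _ : Fin n => μ)
    rw [hg]
  -- Step III : Jensen
  set u : Fin n → ℝ := fun _ => (n:ℝ)⁻¹ with hudef
  set cc : Fin n → (Fin n → ℝ) := fun i j => d' (i + j) with hccdef
  have hcc0 : ∀ i j, 0 ≤ cc i j := fun i j => hd'0 _
  have hccA : ∀ i, A (cc i) = A d' := by
    intro i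
    have h1 : cc i = d' ∘ (Equiv.addLeft i) := by funext j; rfl
    rw [h1, hAinv]
  have hccsum : ∀ i, ∑ j : Fin n, cc i j = 1 := by
    intro i
    rw [← hd'sum]
    exact Fintype.sum_equiv (Equiv.addLeft i) _ _ (fun j => rfl)
  have hGconv : ConvexOn ℝ (Set.Ioi 0) (fun x => (μ (Set.Ici x)).toReal) := by
    refine aux_convexOn_Ici μ F (fun t => ?_) hF_conc
    rw [hF_cdf m t, hμdef, Measure.map_apply (hV_meas m) measurableSet_Iic]
    rfl
  have hael : ∀ᵐ ω ∂P, ∀ j : Fin n, 0 < V (m+1+(j:ℕ)) ω := by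
    rw [MeasureTheory.ae_all_iff]
    exact fun j => hV_pos _
  have hwsum : ∑ _i : Fin n, (n:ℝ)⁻¹ = 1 := by
    rw [Finset.sum_const, Finset.card_univ, Fintype.card_fin, nsmul_eq_mul]
    have : (n:ℝ) ≠ 0 := by positivity
    field_simp
  have hptwise : ∀ᵐ ω ∂P, G' (W u ω) ≤
      ∑ i : Fin n, ENNReal.ofReal ((n:ℝ)⁻¹) * G' (W (cc i) ω) := by
    filter_upwards [hael] with ω hω
    have hpmem : ∀ i : Fin n, i ∈ Finset.univ → W (cc i) ω ∈ Set.Ioi 0 := by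
      intro i _
      rw [Set.mem_Ioi]
      have hex : ∃ j : Fin n, 0 < cc i j := by
        by_contra h
        push_neg at h
        have h2 : ∑ j : Fin n, cc i j ≤ 0 := Finset.sum_nonpos (fun j _ => h j)
        rw [hccsum i] at h2; linarith
      obtain ⟨j0, hj0⟩ := hex
      exact Finset.sum_pos' (fun j _ => mul_nonneg (hcc0 i j) (le_of_lt (hω j)))
        ⟨j0, Finset.mem_univ _, mul_pos hj0 (hω j0)⟩
    have hcenter : W u ω = ∑ i : Fin n, (n:ℝ)⁻¹ • W (cc i) ω := by
      simp only [hWdef, smul_eq_mul, hudef]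
      have hinner : ∀ j : Fin n, ∑ i : Fin n, cc i j * V (m+1+(j:ℕ)) ω
          = V (m+1+(j:ℕ)) ω := by
        intro j
        rw [← Finset.sum_mul]
        have h3 : ∑ i : Fin n, cc i j = 1 := by
          rw [← hd'sum]
          exact Fintype.sum_equiv (Equiv.addRight j) _ _ (fun i => rfl)
        rw [h3, one_mul]
      have hR : ∑ i : Fin n, (n:ℝ)⁻¹ * ∑ j : Fin n, cc i j * V (m+1+(j:ℕ)) ω
          = (n:ℝ)⁻¹ * ∑ j : Fin n, V (m+1+(j:ℕ)) ω := by
        rw [← Finset.mul_sum, Finset.sum_comm]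
        rw [Finset.sum_congr rfl (fun j _ => hinner j)]
      rw [hR, Finset.mul_sum]
    have hJ := hGconv.map_sum_le (t := Finset.univ) (w := fun _ => (n:ℝ)⁻¹)
      (p := fun i => W (cc i) ω) (fun i _ => by positivity) hwsum hpmem
    rw [← hcenter] at hJ
    have hG'x : ∀ x : ℝ, G' x = ENNReal.ofReal ((μ (Set.Ici x)).toReal) :=
      fun x => (ENNReal.ofReal_toReal (measure_ne_top μ _)).symm
    calc G' (W u ω) = ENNReal.ofReal ((μ (Set.Ici (W u ω))).toReal) := hG'x _
      _ ≤ ENNReal.ofReal (∑ i : Fin n, (n:ℝ)⁻¹ * (μ (Set.Ici (W (cc i) ω))).toReal) :=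
          ENNReal.ofReal_le_ofReal hJ
      _ = ∑ i : Fin n, ENNReal.ofReal ((n:ℝ)⁻¹ * (μ (Set.Ici (W (cc i) ω))).toReal) :=
          ENNReal.ofReal_sum_of_nonneg (fun i _ =>
            mul_nonneg (by positivity) ENNReal.toReal_nonneg)
      _ = ∑ i : Fin n, ENNReal.ofReal ((n:ℝ)⁻¹) * G' (W (cc i) ω) := by
          refine Finset.sum_congr rfl (fun i _ => ?_)
          rw [ENNReal.ofReal_mul (by positivity), ← hG'x _]
  have hfinal : A u ≤ A d' := by
    rw [hA u]
    have hmeasi : ∀ i : Fin n, Measurable (fun ω => ENNReal.ofReal ((n:ℝ)⁻¹) * G' (W (cc i) ω)) :=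
      fun i => (hG'meas.comp (hWmeas _)).const_mul _
    calc ∫⁻ ω, G' (W u ω) ∂P
        ≤ ∫⁻ ω, ∑ i : Fin n, ENNReal.ofReal ((n:ℝ)⁻¹) * G' (W (cc i) ω) ∂P :=
          lintegral_mono_ae hptwise
      _ = ∑ i : Fin n, ∫⁻ ω, ENNReal.ofReal ((n:ℝ)⁻¹) * G' (W (cc i) ω) ∂P :=
          lintegral_finset_sum _ (fun i _ => hmeasi i)
      _ = ∑ i : Fin n, ENNReal.ofReal ((n:ℝ)⁻¹) * A (cc i) := by
          refine Finset.sum_congr rfl (fun i _ => ?_)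
          rw [lintegral_const_mul (ENNReal.ofReal ((n:ℝ)⁻¹))
            (f := fun ω => G' (W (cc i) ω)) (hG'meas.comp (hWmeas _)), ← hA (cc i)]
      _ = ∑ _i : Fin n, ENNReal.ofReal ((n:ℝ)⁻¹) * A d' :=
          Finset.sum_congr rfl (fun i _ => by rw [hccA i])
      _ = A d' := by
          rw [Finset.sum_const, Finset.card_univ, Fintype.card_fin, nsmul_eq_mul,
            ← mul_assoc]
          have h4 : (n : ℝ≥0∞) * ENNReal.ofReal ((n:ℝ)⁻¹) = 1 := by
            rw [ENNReal.ofReal_inv_of_pos (by positivity), ENNReal.ofReal_natCast,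
              ENNReal.mul_inv_cancel (Nat.cast_ne_zero.mpr (by omega)) (by simp)]
          rw [h4, one_mul]
  have hset1 : {ω | ∑ l ∈ Finset.Icc (m+1) k, ((k:ℝ)-(m:ℝ))⁻¹ * V l ω ≤ V m ω}
      = {ω | W u ω ≤ V m ω} := by
    ext ω
    simp only [Set.mem_setOf_eq]
    rw [sum_shift_base m k n hnc (fun l => ((k:ℝ)-(m:ℝ))⁻¹ * V l ω), hncast]
  have hset2 : {ω | ∑ l ∈ Finset.Icc (m+1) k, d l * V l ω ≤ V m ω}
      = {ω | W d' ω ≤ V m ω} := by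
    ext ω
    simp only [Set.mem_setOf_eq]
    rw [sum_shift_base m k n hnc (fun l => d l * V l ω)]
  rw [hset1, hset2]
  exact hfinal
end
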